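/- Let r > 0 and let u, v : ℝ → ℝ be twice differentiable with u(t) > 0 and (u̇(t), v̇(t)) ≠ (0,0) for all t. Then γ(t) = ψ(u(t), v(t)) is an extrinsic catenary of elliptic type (i.e., satisfies the Euler–Lagrange equations of ∫ f(u,v)‖γ̇‖ dt with f(u,v) = sinh(u/r)) if and only if its geodesic curvature κ in H²(r) satisfies κ = v̇ cosh²(u/r)/(r sinh(u/r)‖γ̇‖) for all t. -/

import Mathlib

noncomputable section
open Real

/-- Minkowski inner product of `E₁³`. -/
def mink3 (X Y : ℝ × ℝ × ℝ) : ℝ := -(X.1 * Y.1) + X.2.1 * Y.2.1 + X.2.2 * Y.2.2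

/-- Speed `‖γ̇‖ = √(−ẋ² + ẏ² + ż²)` of a curve `(x,y,z)` in `E₁³`. -/
def speed3 (x y z : ℝ → ℝ) (t : ℝ) : ℝ :=
  Real.sqrt (-(deriv x t) ^ 2 + (deriv y t) ^ 2 + (deriv z t) ^ 2)

/-- Geodesic curvature of the curve `(x,y,z)` in `H²(r)`. -/
def kappaH2 (r : ℝ) (x y z : ℝ → ℝ) (t : ℝ) : ℝ :=
  -(x t * (deriv (deriv y) t * deriv z t - deriv y t * deriv (deriv z) t)
      - y t * (deriv (deriv x) t * deriv z t - deriv x t * deriv (deriv z) t)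
      + z t * (deriv (deriv x) t * deriv y t - deriv x t * deriv (deriv y) t))
    / (r * (speed3 x y z t) ^ 3)

/-- First component of `γ(t) = ψ(u(t), v(t))` (semi-geodesic parametrization). -/
def gX (r : ℝ) (u v : ℝ → ℝ) (t : ℝ) : ℝ :=
  r * Real.cosh (u t / r) * Real.cosh (v t / r)

/-- Second component of `γ(t) = ψ(u(t), v(t))`. -/
def gY (r : ℝ) (u v : ℝ → ℝ) (t : ℝ) : ℝ :=
  r * Real.cosh (u t / r) * Real.sinh (v t / r)

/-- Third component of `γ(t) = ψ(u(t), v(t))`. -/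
def gZ (r : ℝ) (u v : ℝ → ℝ) (t : ℝ) : ℝ :=
  r * Real.sinh (u t / r)

/-- `‖γ̇‖` in semi-geodesic coordinates: `√(u̇² + cosh²(u/r) v̇²)`. -/
def speedSG (r : ℝ) (u v : ℝ → ℝ) (t : ℝ) : ℝ :=
  Real.sqrt ((deriv u t) ^ 2 + (Real.cosh (u t / r)) ^ 2 * (deriv v t) ^ 2)

/-- Geodesic curvature of `γ(t) = ψ(u(t), v(t))` in `H²(r)`. -/
def kappaSG (r : ℝ) (u v : ℝ → ℝ) (t : ℝ) : ℝ :=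
  kappaH2 r (gX r u v) (gY r u v) (gZ r u v) t

/-- The Euler–Lagrange equations of the functional `∫ f(u,v) ‖γ̇‖ dt` in
semi-geodesic coordinates. -/
def EulerLagrange (r : ℝ) (f : ℝ → ℝ → ℝ) (u v : ℝ → ℝ) : Prop :=
  ∀ t : ℝ,
    deriv (fun a => f a (v t)) (u t) * speedSG r u v t
        + f (u t) (v t) * Real.sinh (u t / r) * Real.cosh (u t / r) * (deriv v t) ^ 2
          / (r * speedSG r u v t)
      = deriv (fun s => f (u s) (v s) * deriv u s / speedSG r u v s) t
    ∧ deriv (fun b => f (u t) b) (v t) * speedSG r u v t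
      = deriv (fun s =>
          f (u s) (v s) * deriv v s * (Real.cosh (u s / r)) ^ 2 / speedSG r u v s) t

section Aux
variable {r : ℝ} {u v : ℝ → ℝ}
variable {r : ℝ} {u v : ℝ → ℝ}

lemma hd_sinh (hu : Differentiable ℝ u) (t : ℝ) :
    HasDerivAt (fun s => Real.sinh (u s / r)) (Real.cosh (u t / r) * deriv u t / r) t := by
  have := (Real.hasDerivAt_sinh (u t / r)).comp t ((hu t).hasDerivAt.div_const r)
  simp only [mul_div_assoc] at this ⊢; exact this

lemma hd_cosh (hu : Differentiable ℝ u) (t : ℝ) :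
    HasDerivAt (fun s => Real.cosh (u s / r)) (Real.sinh (u t / r) * deriv u t / r) t := by
  have := (Real.hasDerivAt_cosh (u t / r)).comp t ((hu t).hasDerivAt.div_const r)
  simp only [mul_div_assoc] at this ⊢; exact this

lemma wsq_pos (t : ℝ) (h : deriv u t ≠ 0 ∨ deriv v t ≠ 0) :
    0 < (deriv u t) ^ 2 + (Real.cosh (u t / r)) ^ 2 * (deriv v t) ^ 2 := by
  have hc : 0 < Real.cosh (u t / r) := Real.cosh_pos _
  rcases h with h | h
  · have : 0 < (deriv u t) ^ 2 := by positivity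
    nlinarith [sq_nonneg (Real.cosh (u t / r) * deriv v t)]
  · have : 0 < (Real.cosh (u t / r)) ^ 2 * (deriv v t) ^ 2 := by positivity
    nlinarith [sq_nonneg (deriv u t)]

lemma speedSG_pos (t : ℝ) (h : deriv u t ≠ 0 ∨ deriv v t ≠ 0) :
    0 < speedSG r u v t := Real.sqrt_pos.2 (wsq_pos t h)

lemma speedSG_sq (t : ℝ) (h : deriv u t ≠ 0 ∨ deriv v t ≠ 0) :
    (speedSG r u v t) ^ 2 = (deriv u t) ^ 2 + (Real.cosh (u t / r)) ^ 2 * (deriv v t) ^ 2 :=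
  Real.sq_sqrt (wsq_pos t h).le

lemma hd_speed (hu : Differentiable ℝ u) (hu2 : Differentiable ℝ (deriv u))
    (hv : Differentiable ℝ v) (hv2 : Differentiable ℝ (deriv v))
    (t : ℝ) (h : deriv u t ≠ 0 ∨ deriv v t ≠ 0) :
    HasDerivAt (speedSG r u v)
      ((deriv u t * deriv (deriv u) t
          + Real.cosh (u t / r) * Real.sinh (u t / r) * deriv u t * (deriv v t) ^ 2 / r
          + (Real.cosh (u t / r)) ^ 2 * deriv v t * deriv (deriv v) t)
        / speedSG r u v t) t := by
  have h1 : HasDerivAt (fun s => (deriv u s) ^ 2)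
      (2 * deriv u t * deriv (deriv u) t) t := by
    have := ((hu2 t).hasDerivAt).pow 2
    simp [mul_comm] at this ⊢; exact this
  have h2 : HasDerivAt (fun s => (Real.cosh (u s / r)) ^ 2 * (deriv v s) ^ 2)
      ((2 * Real.cosh (u t / r) * (Real.sinh (u t / r) * deriv u t / r)) * (deriv v t) ^ 2
        + (Real.cosh (u t / r)) ^ 2 * (2 * deriv v t * deriv (deriv v) t)) t := by
    have hc : HasDerivAt (fun s => (Real.cosh (u s / r)) ^ 2)
        (2 * Real.cosh (u t / r) * (Real.sinh (u t / r) * deriv u t / r)) t := by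
      have := (hd_cosh (r:=r) hu t).pow 2
      simp [pow_one] at this ⊢; exact this
    have hv' : HasDerivAt (fun s => (deriv v s) ^ 2)
        (2 * deriv v t * deriv (deriv v) t) t := by
      have := ((hv2 t).hasDerivAt).pow 2
      simp [mul_comm] at this ⊢; exact this
    exact hc.mul hv'
  have hne : (deriv u t) ^ 2 + (Real.cosh (u t / r)) ^ 2 * (deriv v t) ^ 2 ≠ 0 :=
    (wsq_pos t h).ne'
  have H := (h1.add h2).sqrt hne
  have hw : 0 < speedSG r u v t := speedSG_pos t h
  refine H.congr_deriv ?_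
  simp only [Pi.add_apply]
  have : Real.sqrt ((deriv u t) ^ 2 + (Real.cosh (u t / r)) ^ 2 * (deriv v t) ^ 2)
      = speedSG r u v t := rfl
  rw [this]
  field_simp
  ring

lemma deriv_q1 (hr : 0 < r) (hu : Differentiable ℝ u) (hu2 : Differentiable ℝ (deriv u))
    (hv : Differentiable ℝ v) (hv2 : Differentiable ℝ (deriv v))
    (t : ℝ) (h : deriv u t ≠ 0 ∨ deriv v t ≠ 0) :
    deriv (fun s => Real.sinh (u s / r) * deriv u s / speedSG r u v s) t
      = ((Real.cosh (u t / r) * (deriv u t) ^ 2 / r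
            + Real.sinh (u t / r) * deriv (deriv u) t) * (speedSG r u v t) ^ 2
          - Real.sinh (u t / r) * deriv u t
            * (deriv u t * deriv (deriv u) t
                + Real.cosh (u t / r) * Real.sinh (u t / r) * deriv u t * (deriv v t) ^ 2 / r
                + (Real.cosh (u t / r)) ^ 2 * deriv v t * deriv (deriv v) t))
        / (speedSG r u v t) ^ 3 := by
  have hw : 0 < speedSG r u v t := speedSG_pos t h
  have Hnum : HasDerivAt (fun s => Real.sinh (u s / r) * deriv u s)
      (Real.cosh (u t / r) * deriv u t / r * deriv u t
        + Real.sinh (u t / r) * deriv (deriv u) t) t :=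
    (hd_sinh hu t).mul (hu2 t).hasDerivAt
  have H := Hnum.div (hd_speed hu hu2 hv hv2 t h) hw.ne'
  refine H.deriv.trans ?_
  field_simp

lemma deriv_q2 (hr : 0 < r) (hu : Differentiable ℝ u) (hu2 : Differentiable ℝ (deriv u))
    (hv : Differentiable ℝ v) (hv2 : Differentiable ℝ (deriv v))
    (t : ℝ) (h : deriv u t ≠ 0 ∨ deriv v t ≠ 0) :
    deriv (fun s => Real.sinh (u s / r) * deriv v s * (Real.cosh (u s / r)) ^ 2
        / speedSG r u v s) t
      = (((Real.cosh (u t / r)) ^ 3 / r + 2 * Real.cosh (u t / r) * (Real.sinh (u t / r)) ^ 2 / r)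
            * deriv u t * deriv v t * (speedSG r u v t) ^ 2
          + Real.sinh (u t / r) * (Real.cosh (u t / r)) ^ 2 * deriv (deriv v) t
            * (speedSG r u v t) ^ 2
          - Real.sinh (u t / r) * (Real.cosh (u t / r)) ^ 2 * deriv v t
            * (deriv u t * deriv (deriv u) t
                + Real.cosh (u t / r) * Real.sinh (u t / r) * deriv u t * (deriv v t) ^ 2 / r
                + (Real.cosh (u t / r)) ^ 2 * deriv v t * deriv (deriv v) t))
        / (speedSG r u v t) ^ 3 := by
  have hw : 0 < speedSG r u v t := speedSG_pos t h
  have hc2 : HasDerivAt (fun s => (Real.cosh (u s / r)) ^ 2)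
      (2 * Real.cosh (u t / r) * (Real.sinh (u t / r) * deriv u t / r)) t := by
    have := (hd_cosh (r:=r) hu t).pow 2
    simp [pow_one] at this ⊢; exact this
  have Hnum : HasDerivAt (fun s => Real.sinh (u s / r) * deriv v s * (Real.cosh (u s / r)) ^ 2)
      ((Real.cosh (u t / r) * deriv u t / r * deriv v t
          + Real.sinh (u t / r) * deriv (deriv v) t) * (Real.cosh (u t / r)) ^ 2
        + Real.sinh (u t / r) * deriv v t
          * (2 * Real.cosh (u t / r) * (Real.sinh (u t / r) * deriv u t / r))) t :=
    ((hd_sinh hu t).mul (hv2 t).hasDerivAt).mul hc2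
  have H := Hnum.div (hd_speed hu hu2 hv hv2 t h) hw.ne'
  refine H.deriv.trans ?_
  field_simp
  ring

end Aux

section Aux2
variable {r : ℝ} {u v : ℝ → ℝ}
variable {r : ℝ} {u v : ℝ → ℝ}

lemma deriv_gX (hr : 0 < r) (hu : Differentiable ℝ u) (hv : Differentiable ℝ v) :
    deriv (gX r u v) = fun t =>
      Real.sinh (u t / r) * Real.cosh (v t / r) * deriv u t
        + Real.cosh (u t / r) * Real.sinh (v t / r) * deriv v t := by
  funext t
  have H := ((hd_cosh (r:=r) hu t).const_mul r).mul (hd_cosh (r:=r) hv t)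
  rw [show gX r u v = fun s => r * Real.cosh (u s / r) * Real.cosh (v s / r) from rfl]
  rw [show (fun s => r * Real.cosh (u s / r) * Real.cosh (v s / r))
      = fun s => r * Real.cosh (u s / r) * Real.cosh (v s / r) from rfl] at *
  refine H.deriv.trans ?_
  field_simp

lemma deriv_gY (hr : 0 < r) (hu : Differentiable ℝ u) (hv : Differentiable ℝ v) :
    deriv (gY r u v) = fun t =>
      Real.sinh (u t / r) * Real.sinh (v t / r) * deriv u t
        + Real.cosh (u t / r) * Real.cosh (v t / r) * deriv v t := by
  funext t
  have H := ((hd_cosh (r:=r) hu t).const_mul r).mul (hd_sinh (r:=r) hv t)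
  rw [show gY r u v = fun s => r * Real.cosh (u s / r) * Real.sinh (v s / r) from rfl]
  refine H.deriv.trans ?_
  field_simp

lemma deriv_gZ (hr : 0 < r) (hu : Differentiable ℝ u) :
    deriv (gZ r u v) = fun t => Real.cosh (u t / r) * deriv u t := by
  funext t
  have H := (hd_sinh (r:=r) hu t).const_mul r
  rw [show gZ r u v = fun s => r * Real.sinh (u s / r) from rfl]
  refine H.deriv.trans ?_
  field_simp

lemma deriv2_gX (hr : 0 < r) (hu : Differentiable ℝ u) (hu2 : Differentiable ℝ (deriv u))
    (hv : Differentiable ℝ v) (hv2 : Differentiable ℝ (deriv v)) (t : ℝ) :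
    deriv (deriv (gX r u v)) t
      = Real.cosh (v t / r) * (Real.cosh (u t / r) * (deriv u t) ^ 2 / r
            + Real.sinh (u t / r) * deriv (deriv u) t
            + Real.cosh (u t / r) * (deriv v t) ^ 2 / r)
        + Real.sinh (v t / r) * (2 * Real.sinh (u t / r) * deriv u t * deriv v t / r
            + Real.cosh (u t / r) * deriv (deriv v) t) := by
  rw [deriv_gX hr hu hv]
  have H : HasDerivAt (fun s =>
      Real.sinh (u s / r) * Real.cosh (v s / r) * deriv u s
        + Real.cosh (u s / r) * Real.sinh (v s / r) * deriv v s)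
      (((Real.cosh (u t / r) * deriv u t / r) * Real.cosh (v t / r)
          + Real.sinh (u t / r) * (Real.sinh (v t / r) * deriv v t / r)) * deriv u t
        + Real.sinh (u t / r) * Real.cosh (v t / r) * deriv (deriv u) t
        + (((Real.sinh (u t / r) * deriv u t / r) * Real.sinh (v t / r)
          + Real.cosh (u t / r) * (Real.cosh (v t / r) * deriv v t / r)) * deriv v t
        + Real.cosh (u t / r) * Real.sinh (v t / r) * deriv (deriv v) t)) t :=
    (((hd_sinh (r:=r) hu t).mul (hd_cosh (r:=r) hv t)).mul (hu2 t).hasDerivAt).add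
      (((hd_cosh (r:=r) hu t).mul (hd_sinh (r:=r) hv t)).mul (hv2 t).hasDerivAt)
  rw [H.deriv]
  field_simp
  ring

lemma deriv2_gY (hr : 0 < r) (hu : Differentiable ℝ u) (hu2 : Differentiable ℝ (deriv u))
    (hv : Differentiable ℝ v) (hv2 : Differentiable ℝ (deriv v)) (t : ℝ) :
    deriv (deriv (gY r u v)) t
      = Real.sinh (v t / r) * (Real.cosh (u t / r) * (deriv u t) ^ 2 / r
            + Real.sinh (u t / r) * deriv (deriv u) t
            + Real.cosh (u t / r) * (deriv v t) ^ 2 / r)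
        + Real.cosh (v t / r) * (2 * Real.sinh (u t / r) * deriv u t * deriv v t / r
            + Real.cosh (u t / r) * deriv (deriv v) t) := by
  rw [deriv_gY hr hu hv]
  have H : HasDerivAt (fun s =>
      Real.sinh (u s / r) * Real.sinh (v s / r) * deriv u s
        + Real.cosh (u s / r) * Real.cosh (v s / r) * deriv v s)
      (((Real.cosh (u t / r) * deriv u t / r) * Real.sinh (v t / r)
          + Real.sinh (u t / r) * (Real.cosh (v t / r) * deriv v t / r)) * deriv u t
        + Real.sinh (u t / r) * Real.sinh (v t / r) * deriv (deriv u) t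
        + (((Real.sinh (u t / r) * deriv u t / r) * Real.cosh (v t / r)
          + Real.cosh (u t / r) * (Real.sinh (v t / r) * deriv v t / r)) * deriv v t
        + Real.cosh (u t / r) * Real.cosh (v t / r) * deriv (deriv v) t)) t :=
    (((hd_sinh (r:=r) hu t).mul (hd_sinh (r:=r) hv t)).mul (hu2 t).hasDerivAt).add
      (((hd_cosh (r:=r) hu t).mul (hd_cosh (r:=r) hv t)).mul (hv2 t).hasDerivAt)
  rw [H.deriv]
  field_simp
  ring

lemma deriv2_gZ (hr : 0 < r) (hu : Differentiable ℝ u) (hu2 : Differentiable ℝ (deriv u))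
    (t : ℝ) :
    deriv (deriv (gZ r u v)) t
      = Real.sinh (u t / r) * (deriv u t) ^ 2 / r + Real.cosh (u t / r) * deriv (deriv u) t := by
  rw [deriv_gZ (v:=v) hr hu]
  have H : HasDerivAt (fun s => Real.cosh (u s / r) * deriv u s)
      ((Real.sinh (u t / r) * deriv u t / r) * deriv u t
        + Real.cosh (u t / r) * deriv (deriv u) t) t :=
    (hd_cosh (r:=r) hu t).mul (hu2 t).hasDerivAt
  rw [H.deriv]
  field_simp

lemma speed3_eq (hr : 0 < r) (hu : Differentiable ℝ u) (hv : Differentiable ℝ v) (t : ℝ) :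
    speed3 (gX r u v) (gY r u v) (gZ r u v) t = speedSG r u v t := by
  unfold speed3 speedSG
  rw [deriv_gX hr hu hv, deriv_gY hr hu hv, deriv_gZ (v:=v) hr hu]
  congr 1
  have h1 : Real.cosh (v t / r) ^ 2 - Real.sinh (v t / r) ^ 2 = 1 :=
    Real.cosh_sq_sub_sinh_sq _
  have h2 : Real.cosh (u t / r) ^ 2 - Real.sinh (u t / r) ^ 2 = 1 :=
    Real.cosh_sq_sub_sinh_sq _
  linear_combination (Real.cosh (u t / r) ^ 2 * (deriv v t) ^ 2
      - Real.sinh (u t / r) ^ 2 * (deriv u t) ^ 2) * h1 + (deriv u t) ^ 2 * h2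

lemma kappa_closed (hr : 0 < r) (hu : Differentiable ℝ u) (hu2 : Differentiable ℝ (deriv u))
    (hv : Differentiable ℝ v) (hv2 : Differentiable ℝ (deriv v))
    (t : ℝ) (h : deriv u t ≠ 0 ∨ deriv v t ≠ 0) :
    kappaSG r u v t
      = -(r * Real.cosh (u t / r) * (deriv u t * deriv (deriv v) t - deriv (deriv u) t * deriv v t)
          + Real.sinh (u t / r) * (2 * (deriv u t) ^ 2 * deriv v t
              + (Real.cosh (u t / r)) ^ 2 * (deriv v t) ^ 3))
        / (r * (speedSG r u v t) ^ 3) := by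
  have hw : 0 < speedSG r u v t := speedSG_pos t h
  have hne : r * (speedSG r u v t) ^ 3 ≠ 0 := by positivity
  unfold kappaSG kappaH2
  rw [speed3_eq hr hu hv, deriv2_gX hr hu hu2 hv hv2, deriv2_gY hr hu hu2 hv hv2,
    deriv2_gZ (v:=v) hr hu hu2, deriv_gX hr hu hv, deriv_gY hr hu hv, deriv_gZ (v:=v) hr hu]
  show -(gX r u v t * _ - gY r u v t * _ + gZ r u v t * _) / _ = _
  unfold gX gY gZ
  rw [div_eq_div_iff hne hne]
  have h1 : Real.cosh (v t / r) ^ 2 - Real.sinh (v t / r) ^ 2 = 1 :=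
    Real.cosh_sq_sub_sinh_sq _
  have h2 : Real.cosh (u t / r) ^ 2 - Real.sinh (u t / r) ^ 2 = 1 :=
    Real.cosh_sq_sub_sinh_sq _
  linear_combination
    (-(r * (speedSG r u v t) ^ 3))
        * (r * Real.cosh (u t / r) ^ 2
              * (deriv u t * (2 * Real.sinh (u t / r) * deriv u t * deriv v t / r
                    + Real.cosh (u t / r) * deriv (deriv v) t)
                 - deriv v t * (Real.sinh (u t / r) * (deriv u t) ^ 2 / r
                    + Real.cosh (u t / r) * deriv (deriv u) t))
            + r * Real.sinh (u t / r)
              * ((Real.cosh (u t / r) * (deriv u t) ^ 2 / r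
                    + Real.sinh (u t / r) * deriv (deriv u) t
                    + Real.cosh (u t / r) * (deriv v t) ^ 2 / r)
                  * Real.cosh (u t / r) * deriv v t
                 - (2 * Real.sinh (u t / r) * deriv u t * deriv v t / r
                    + Real.cosh (u t / r) * deriv (deriv v) t)
                  * Real.sinh (u t / r) * deriv u t)) * h1
    + (-(r * (speedSG r u v t) ^ 3))
        * (r * (2 * Real.sinh (u t / r) * deriv u t * deriv v t / r
              + Real.cosh (u t / r) * deriv (deriv v) t) * deriv u t
            - r * Real.cosh (u t / r) * deriv (deriv u) t * deriv v t) * h2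
    + (-(r * Real.cosh (u t / r) ^ 2 * Real.sinh (u t / r) * (deriv v t) ^ 3
            * (speedSG r u v t) ^ 3
          + 2 * r * (deriv u t) ^ 2 * Real.sinh (u t / r) * deriv v t
            * (speedSG r u v t) ^ 3)) * (mul_inv_cancel₀ hr.ne' : r * r⁻¹ = 1)

def PP (r : ℝ) (u v : ℝ → ℝ) (t : ℝ) : ℝ :=
  ((Real.cosh (u t / r)) ^ 2 + 2 * (Real.sinh (u t / r)) ^ 2) * (deriv u t) ^ 2 * deriv v t
    + (Real.cosh (u t / r)) ^ 2 * ((Real.cosh (u t / r)) ^ 2 + (Real.sinh (u t / r)) ^ 2)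
      * (deriv v t) ^ 3
    + r * Real.sinh (u t / r) * Real.cosh (u t / r)
      * (deriv u t * deriv (deriv v) t - deriv (deriv u) t * deriv v t)

lemma deriv_sinh_div (x : ℝ) : deriv (fun a => Real.sinh (a / r)) x = Real.cosh (x / r) / r := by
  have H : HasDerivAt (fun a => Real.sinh (a / r)) (Real.cosh (x / r) * (1 / r)) x :=
    (Real.hasDerivAt_sinh _).comp x ((hasDerivAt_id x).div_const r)
  rw [H.deriv]; rw [mul_one_div]

lemma aux_iff {A B c p : ℝ} (hc : c ≠ 0) (hfac : A - B = c * p) : A = B ↔ p = 0 := by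
  rw [← sub_eq_zero, hfac, mul_eq_zero]
  simp [hc]

lemma EL1_iff (hr : 0 < r) (hu : Differentiable ℝ u) (hu2 : Differentiable ℝ (deriv u))
    (hv : Differentiable ℝ v) (hv2 : Differentiable ℝ (deriv v))
    (t : ℝ) (h : deriv u t ≠ 0 ∨ deriv v t ≠ 0) :
    (deriv (fun a => Real.sinh (a / r)) (u t) * speedSG r u v t
        + Real.sinh (u t / r) * Real.sinh (u t / r) * Real.cosh (u t / r) * (deriv v t) ^ 2
          / (r * speedSG r u v t)
      = deriv (fun s => Real.sinh (u s / r) * deriv u s / speedSG r u v s) t)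
      ↔ deriv v t * PP r u v t = 0 := by
  have hw : 0 < speedSG r u v t := speedSG_pos t h
  have hw2 := speedSG_sq (r:=r) t h
  rw [deriv_sinh_div, deriv_q1 hr hu hu2 hv hv2 t h]
  refine aux_iff (c := Real.cosh (u t / r) / (r * (speedSG r u v t) ^ 3)) ?_ ?_
  · positivity
  · unfold PP
    field_simp
    linear_combination (Real.cosh (u t / r) * speedSG r u v t ^ 2
        + (Real.cosh (u t / r)) ^ 3 * (deriv v t) ^ 2
        + Real.cosh (u t / r) * (Real.sinh (u t / r)) ^ 2 * (deriv v t) ^ 2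
        - r * Real.sinh (u t / r) * deriv (deriv u) t) * hw2

lemma EL2_iff (hr : 0 < r) (hu : Differentiable ℝ u) (hu2 : Differentiable ℝ (deriv u))
    (hv : Differentiable ℝ v) (hv2 : Differentiable ℝ (deriv v))
    (t : ℝ) (h : deriv u t ≠ 0 ∨ deriv v t ≠ 0) :
    (deriv (fun _ => Real.sinh (u t / r)) (v t) * speedSG r u v t
      = deriv (fun s => Real.sinh (u s / r) * deriv v s * (Real.cosh (u s / r)) ^ 2
          / speedSG r u v s) t)
      ↔ deriv u t * PP r u v t = 0 := by
  have hw : 0 < speedSG r u v t := speedSG_pos t h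
  have hw2 := speedSG_sq (r:=r) t h
  rw [deriv_const, deriv_q2 hr hu hu2 hv hv2 t h]
  refine aux_iff (c := -(Real.cosh (u t / r) / (r * (speedSG r u v t) ^ 3))) ?_ ?_
  · have : 0 < Real.cosh (u t / r) / (r * (speedSG r u v t) ^ 3) := by positivity
    linarith
  · unfold PP
    field_simp
    linear_combination (-(Real.sinh (u t / r) * (Real.cosh (u t / r)) ^ 2 * r * deriv (deriv v) t
        + 2 * (Real.sinh (u t / r)) ^ 2 * Real.cosh (u t / r) * deriv v t * deriv u t
        + (Real.cosh (u t / r)) ^ 3 * deriv v t * deriv u t)) * hw2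

lemma kappa_iff (hr : 0 < r) {t : ℝ} (hs : 0 < Real.sinh (u t / r))
    (hu : Differentiable ℝ u) (hu2 : Differentiable ℝ (deriv u))
    (hv : Differentiable ℝ v) (hv2 : Differentiable ℝ (deriv v))
    (h : deriv u t ≠ 0 ∨ deriv v t ≠ 0) :
    (kappaSG r u v t
        = deriv v t * (Real.cosh (u t / r)) ^ 2
            / (r * Real.sinh (u t / r) * speedSG r u v t))
      ↔ PP r u v t = 0 := by
  have hw : 0 < speedSG r u v t := speedSG_pos t h
  have hw2 := speedSG_sq (r:=r) t h
  rw [kappa_closed hr hu hu2 hv hv2 t h]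
  refine aux_iff
    (c := -(1 / (r * Real.sinh (u t / r) * (speedSG r u v t) ^ 3))) ?_ ?_
  · have : 0 < 1 / (r * Real.sinh (u t / r) * (speedSG r u v t) ^ 3) := by positivity
    linarith
  · unfold PP
    field_simp
    linear_combination (-((Real.cosh (u t / r)) ^ 2 * deriv v t)) * hw2

/-- extrinsic catenaries of elliptic type. -/
theorem extrinsic_catenary_elliptic_iff (r : ℝ) (hr : 0 < r) (u v : ℝ → ℝ)
    (hupos : ∀ t : ℝ, 0 < u t)
    (hu : Differentiable ℝ u) (hu2 : Differentiable ℝ (deriv u))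
    (hv : Differentiable ℝ v) (hv2 : Differentiable ℝ (deriv v))
    (hreg : ∀ t : ℝ, (deriv u t, deriv v t) ≠ (0, 0)) :
    EulerLagrange r (fun a _ => Real.sinh (a / r)) u v ↔
      ∀ t : ℝ,
        kappaSG r u v t
          = deriv v t * (Real.cosh (u t / r)) ^ 2
            / (r * Real.sinh (u t / r) * speedSG r u v t) := by
  have hor : ∀ t, deriv u t ≠ 0 ∨ deriv v t ≠ 0 := by
    intro t
    by_contra hc
    push_neg at hc
    exact hreg t (by simp [hc.1, hc.2])
  have hs : ∀ t, 0 < Real.sinh (u t / r) := by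
    intro t
    have : 0 < u t / r := div_pos (hupos t) hr
    positivity
  constructor
  · intro H t
    obtain ⟨h1, h2⟩ := H t
    have e1 := (EL1_iff hr hu hu2 hv hv2 t (hor t)).mp h1
    have e2 := (EL2_iff hr hu hu2 hv hv2 t (hor t)).mp h2
    have hP : PP r u v t = 0 := by
      rcases hor t with h | h
      · exact (mul_eq_zero.mp e2).resolve_left h
      · exact (mul_eq_zero.mp e1).resolve_left h
    exact (kappa_iff hr (hs t) hu hu2 hv hv2 (hor t)).mpr hP
  · intro H t
    have hP := (kappa_iff hr (hs t) hu hu2 hv hv2 (hor t)).mp (H t)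
    exact ⟨(EL1_iff hr hu hu2 hv hv2 t (hor t)).mpr (by rw [hP, mul_zero]),
      (EL2_iff hr hu hu2 hv hv2 t (hor t)).mpr (by rw [hP, mul_zero])⟩

end Aux2
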